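/- Let A = {x ∈ ℝ^{d_in} : n·x > o} be an open half-space with unit normal n, and let δ ∈ ℝ^{d_in}, 𝔟 ∈ ℝ. The function g(x) = 1_A(x)(δ·x + 𝔟) is continuous on ℝ^{d_in} if and only if ∂A = {x : n·x = o} is contained in {x : δ·x + 𝔟 = 0}. -/

import Mathlib

/-- `1_A(x)(δ·x + 𝔟)` is continuous iff the boundary hyperplane of the
half-space `A = {x : n·x > o}` is contained in the zero set of `x ↦ δ·x + 𝔟`. -/
theorem stmt18 (din : ℕ) (hdin : 1 ≤ din)
    (n : EuclideanSpace ℝ (Fin din)) (hn : ‖n‖ = 1) (o : ℝ)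
    (δ : EuclideanSpace ℝ (Fin din)) (𝔟 : ℝ) :
    Continuous (Set.indicator {y : EuclideanSpace ℝ (Fin din) | (inner ℝ n y : ℝ) > o}
        (fun y => (inner ℝ δ y : ℝ) + 𝔟)) ↔
      {x : EuclideanSpace ℝ (Fin din) | (inner ℝ n x : ℝ) = o} ⊆
        {x : EuclideanSpace ℝ (Fin din) | (inner ℝ δ x : ℝ) + 𝔟 = 0} := by
  classical
  set A : Set (EuclideanSpace ℝ (Fin din)) := {y | (inner ℝ n y : ℝ) > o} with hA
  set f : EuclideanSpace ℝ (Fin din) → ℝ := fun y => (inner ℝ δ y : ℝ) + 𝔟 with hf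
  have hfc : Continuous f := ((innerSL ℝ δ).continuous).add continuous_const
  have hsurj : Function.Surjective (innerSL ℝ n) := by
    intro r
    refine ⟨r • n, ?_⟩
    have h1 : (inner ℝ n n : ℝ) = 1 := by
      rw [real_inner_self_eq_norm_sq, hn]; norm_num
    simp [real_inner_smul_right, h1, hn]
  have hfr : frontier A = {x : EuclideanSpace ℝ (Fin din) | (inner ℝ n x : ℝ) = o} := by
    have : A = (innerSL ℝ n) ⁻¹' Set.Ioi o := rfl
    rw [this, (innerSL ℝ n).frontier_preimage hsurj, frontier_Ioi]
    rfl
  constructor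
  · intro hc x hx
    have hxfr : x ∈ frontier A := by rw [hfr]; exact hx
    have hxcl : x ∈ closure A := frontier_subset_closure hxfr
    have hne : (nhdsWithin x A).NeBot := mem_closure_iff_nhdsWithin_neBot.mp hxcl
    have hxA : x ∉ A := by
      intro hmem
      have hgt : (inner ℝ n x : ℝ) > o := hmem
      have hx' : (inner ℝ n x : ℝ) = o := hx
      rw [hx'] at hgt
      exact lt_irrefl o hgt
    have h1 : Filter.Tendsto (Set.indicator A f) (nhdsWithin x A) (nhds 0) := by
      have := (hc.tendsto x).mono_left (nhdsWithin_le_nhds (s := A))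
      rwa [Set.indicator_of_notMem hxA] at this
    have h2 : Filter.Tendsto (Set.indicator A f) (nhdsWithin x A) (nhds (f x)) := by
      refine Filter.Tendsto.congr' ?_ ((hfc.tendsto x).mono_left nhdsWithin_le_nhds)
      filter_upwards [self_mem_nhdsWithin] with y hy
      exact (Set.indicator_of_mem hy f).symm
    exact tendsto_nhds_unique h2 h1
  · intro h
    rw [← Set.piecewise_eq_indicator]
    refine Continuous.piecewise ?_ hfc continuous_const
    intro a ha
    rw [hfr] at ha
    exact h ha
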